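/- In any potentially infinite model, the extension of the natural number predicate at a world w is an initial segment of the distinguished numbers: letting n be the least natural number such that a(n) ∉ D(w), if n > 0 then the set {x ∈ D(w) : ℕ x holds at w} equals {a(0), a(1), …, a(n−1)}, and n = 0 if and only if this set is empty. -/

import Mathlib

/-- The rigid cardinality ("octothorpe") operator: #X = a(|X|). -/
def octo (a : ℕ → ℕ) (X : Finset ℕ) : ℕ := a X.card

/-- A potentially infinite (PI) model: a countably infinite set of worlds `W`,
a directed partial order `R`, nonempty finite domains strictly increasing along `R`,
and an injection `a : ℕ → ⋃ D` implementing the rigid cardinality operator. -/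
def IsPIModel {W : Type} (R : W → W → Prop) (D : W → Finset ℕ) (a : ℕ → ℕ) : Prop :=
  Countable W ∧ Infinite W ∧
  (∀ w, R w w) ∧ (∀ w s t, R w s → R s t → R w t) ∧ (∀ w s, R w s → R s w → w = s) ∧
  (∀ w s : W, ∃ t, R w t ∧ R s t) ∧
  (∀ w, (D w).Nonempty) ∧
  (∀ w s, R w s → w ≠ s → D w ⊂ D s) ∧
  Function.Injective a ∧
  (∀ n, ∃ w, a n ∈ D w)

/-- S x y ≡ ◇∃G ∃u (u ∈ G ∧ y = #G ∧ x = #(G \ {u})). -/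
def Succ {W : Type} (R : W → W → Prop) (D : W → Finset ℕ) (a : ℕ → ℕ)
    (w : W) (x y : ℕ) : Prop :=
  ∃ s, R w s ∧ ∃ G : Finset ℕ, G ⊆ D s ∧ ∃ u ∈ G, y = octo a G ∧ x = octo a (G.erase u)

/-- S' x y ≡ ◇∃F ∃u (u ∉ F ∧ x = #F ∧ y = #(F ∪ {u})). -/
def Succ' {W : Type} (R : W → W → Prop) (D : W → Finset ℕ) (a : ℕ → ℕ)
    (w : W) (x y : ℕ) : Prop :=
  ∃ s, R w s ∧ ∃ F : Finset ℕ, F ⊆ D s ∧ ∃ u ∈ D s, u ∉ F ∧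
    x = octo a F ∧ y = octo a (insert u F)

/-- The strong ancestral S⁺ of the successor relation at world `w`,
with second-order quantification over all subsets of `D w`. -/
def SAnc {W : Type} (R : W → W → Prop) (D : W → Finset ℕ) (a : ℕ → ℕ)
    (w : W) (b c : ℕ) : Prop :=
  ∀ X : Finset ℕ, X ⊆ D w →
    (∀ x ∈ D w, ∀ y ∈ D w, x ∈ X → Succ R D a w x y → y ∈ X) →
    (∀ x ∈ D w, Succ R D a w b x → x ∈ X) → c ∈ X

/-- The weak (reflexive) ancestral S⁺⁼. -/
def SAncW {W : Type} (R : W → W → Prop) (D : W → Finset ℕ) (a : ℕ → ℕ)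
    (w : W) (b c : ℕ) : Prop :=
  SAnc R D a w b c ∨ b = c

/-- ℕ x at w ≡ S⁺⁼(0,x) ∧ 0 exists at w, where 0 = #∅. -/
def NatNum {W : Type} (R : W → W → Prop) (D : W → Finset ℕ) (a : ℕ → ℕ)
    (w : W) (x : ℕ) : Prop :=
  SAncW R D a w (octo a ∅) x ∧ octo a ∅ ∈ D w

/-- +(x,y,z) ≡ ◇∃X ∃Y (x = #X ∧ y = #Y ∧ z = #(X ∪ Y) ∧ X ∩ Y = ∅). -/
def AddRel {W : Type} (R : W → W → Prop) (D : W → Finset ℕ) (a : ℕ → ℕ)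
    (w : W) (x y z : ℕ) : Prop :=
  ∃ s, R w s ∧ ∃ X Y : Finset ℕ, X ⊆ D s ∧ Y ⊆ D s ∧
    x = octo a X ∧ y = octo a Y ∧ z = octo a (X ∪ Y) ∧ X ∩ Y = ∅

/-- ×(x,y,z) ≡ ◇∃X ∃P [#X = y ∧ each row of P over X has cardinality x ∧
rows are pairwise disjoint ∧ #(union of the rows) = z]. -/
def MulRel {W : Type} (R : W → W → Prop) (D : W → Finset ℕ) (a : ℕ → ℕ)
    (w : W) (x y z : ℕ) : Prop :=
  ∃ s, R w s ∧ ∃ X : Finset ℕ, X ⊆ D s ∧ ∃ P : Finset (ℕ × ℕ), P ⊆ (D s) ×ˢ (D s) ∧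
    octo a X = y ∧
    (∀ u ∈ X, octo a ((P.filter (fun p => p.1 = u)).image Prod.snd) = x) ∧
    (∀ u ∈ X, ∀ v ∈ X, u ≠ v →
      ((P.filter (fun p => p.1 = u)).image Prod.snd) ∩
        ((P.filter (fun p => p.1 = v)).image Prod.snd) = ∅) ∧
    octo a (X.biUnion (fun u => (P.filter (fun p => p.1 = u)).image Prod.snd)) = z

/-- The extension of ℕ at a world is the initial segment of the distinguished numbers:
if n is the least number with a(n) ∉ D w, then for n > 0 the ℕ's at w are exactly
{a(0), …, a(n−1)}, and n = 0 iff no element of D w is a natural number at w. -/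
theorem stmt4 {W : Type} (R : W → W → Prop) (D : W → Finset ℕ) (aa : ℕ → ℕ)
    (hM : IsPIModel R D aa) (w : W) (n : ℕ)
    (hbelow : ∀ k < n, aa k ∈ D w) (hn : aa n ∉ D w) :
    (0 < n → {x : ℕ | x ∈ D w ∧ NatNum R D aa w x} = aa '' {k : ℕ | k < n}) ∧
    (n = 0 ↔ {x : ℕ | x ∈ D w ∧ NatNum R D aa w x} = ∅) := by
  obtain ⟨_, _, hrefl, htrans, _, hdir, hnonempty, hgrow, hainj, hacov⟩ := hM
  -- arbitrarily large domains are accessible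
  have hbig : ∀ m : ℕ, ∃ s, R w s ∧ m ≤ (D s).card := by
    intro m
    induction m with
    | zero => exact ⟨w, hrefl w, Nat.zero_le _⟩
    | succ m ih =>
      obtain ⟨s, hws, hcard⟩ := ih
      have hstep : ∃ u, R s u ∧ u ≠ s := by
        by_contra h
        push_neg at h
        have hall : ∀ t, D t ⊆ D s := by
          intro t
          obtain ⟨v, htv, hsv⟩ := hdir t s
          have hv : v = s := h v hsv
          subst hv
          by_cases hts : t = v
          · subst hts; exact Finset.Subset.refl _
          · exact (hgrow t v htv hts).subset
        have hins : ∀ i, aa i ∈ D s := by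
          intro i; obtain ⟨t, ht⟩ := hacov i; exact hall t ht
        have hsub : (Finset.range ((D s).card + 1)).image aa ⊆ D s := by
          intro x hx
          simp only [Finset.mem_image, Finset.mem_range] at hx
          obtain ⟨i, _, rfl⟩ := hx; exact hins i
        have hle := Finset.card_le_card hsub
        rw [Finset.card_image_of_injective _ hainj, Finset.card_range] at hle
        omega
      obtain ⟨u, hsu, hus⟩ := hstep
      have hlt := Finset.card_lt_card (hgrow s u hsu (Ne.symm hus))
      exact ⟨u, htrans w s u hws hsu, by omega⟩
  -- successor relation holds between consecutive a's
  have hsuccEx : ∀ j, Succ R D aa w (aa j) (aa (j + 1)) := by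
    intro j
    obtain ⟨s, hws, hcard⟩ := hbig (j + 1)
    obtain ⟨G, hGs, hGcard⟩ := Finset.exists_subset_card_eq hcard
    have hGne : G.Nonempty := Finset.card_pos.mp (by omega)
    obtain ⟨u, hu⟩ := hGne
    refine ⟨s, hws, G, hGs, u, hu, ?_, ?_⟩
    · simp [octo, hGcard]
    · simp [octo, Finset.card_erase_of_mem hu, hGcard]
  -- successor relation inversion
  have hsuccInv : ∀ x y, Succ R D aa w x y → ∃ j, x = aa j ∧ y = aa (j + 1) := by
    rintro x y ⟨s, hws, G, hGs, u, hu, hy, hx⟩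
    have h1 : 1 ≤ G.card := Finset.card_pos.mpr ⟨u, hu⟩
    refine ⟨G.card - 1, ?_, ?_⟩
    · rw [hx, octo, Finset.card_erase_of_mem hu]
    · rw [hy, octo]; congr 1; omega
  have hocto : octo aa ∅ = aa 0 := by simp [octo]
  -- membership direction: every aa k, k < n, is a natural number at w
  have hmem : ∀ k, k < n → SAncW R D aa w (octo aa ∅) (aa k) := by
    intro k
    induction k with
    | zero => intro _; right; rw [hocto]
    | succ k ih =>
      intro hk
      have hanc := ih (by omega)
      left
      intro X hX hclosed hbase
      rcases hanc with h | h
      · have hkX : aa k ∈ X := h X hX hclosed hbase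
        exact hclosed (aa k) (hbelow k (by omega)) (aa (k + 1)) (hbelow (k + 1) hk)
          hkX (hsuccEx k)
      · exact hbase (aa (k + 1)) (hbelow (k + 1) hk) (h ▸ hsuccEx k)
  -- main set equality for n > 0
  have hmain : 0 < n → {x : ℕ | x ∈ D w ∧ NatNum R D aa w x} = aa '' {k : ℕ | k < n} := by
    intro hpos
    ext x
    simp only [Set.mem_setOf_eq, Set.mem_image]
    constructor
    · rintro ⟨hxD, hanc, h0D⟩
      rcases hanc with h | h
      · -- use X = image of a on range n
        have hx : x ∈ (Finset.range n).image aa := by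
          apply h
          · intro y hy
            simp only [Finset.mem_image, Finset.mem_range] at hy
            obtain ⟨k, hk, rfl⟩ := hy
            exact hbelow k hk
          · intro p hpD q hqD hpX hS
            obtain ⟨j, hpj, hqj⟩ := hsuccInv p q hS
            simp only [Finset.mem_image, Finset.mem_range] at hpX ⊢
            obtain ⟨k, hk, hpk⟩ := hpX
            have hjk : j = k := hainj (by rw [← hpj, hpk])
            subst hjk
            refine ⟨j + 1, ?_, hqj.symm⟩
            rcases Nat.lt_or_ge (j + 1) n with h' | h'
            · exact h'
            · exfalso
              have : j + 1 = n := by omega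
              subst this
              exact hn (hqj ▸ hqD)
          · intro p hpD hS
            obtain ⟨j, hpj, hqj⟩ := hsuccInv _ p hS
            have hj0 : j = 0 := hainj (by rw [← hpj, hocto])
            subst hj0
            simp only [Finset.mem_image, Finset.mem_range]
            refine ⟨1, ?_, hqj.symm⟩
            rcases Nat.lt_or_ge 1 n with h' | h'
            · exact h'
            · exfalso
              have : n = 1 := by omega
              subst this
              exact hn (hqj ▸ hpD)
        simp only [Finset.mem_image, Finset.mem_range] at hx
        obtain ⟨k, hk, hkx⟩ := hx
        exact ⟨k, hk, hkx⟩
      · exact ⟨0, hpos, by rw [← h, hocto]⟩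
    · rintro ⟨k, hk, rfl⟩
      exact ⟨hbelow k hk, hmem k hk, hocto ▸ hbelow 0 hpos⟩
  refine ⟨hmain, ?_, ?_⟩
  · intro h0
    subst h0
    ext x
    simp only [Set.mem_setOf_eq, Set.mem_empty_iff_false, iff_false]
    rintro ⟨_, _, h0D⟩
    exact hn (hocto ▸ h0D)
  · intro hempty
    by_contra h0
    have hpos : 0 < n := Nat.pos_of_ne_zero h0
    have : aa 0 ∈ ({x : ℕ | x ∈ D w ∧ NatNum R D aa w x} : Set ℕ) :=
      ⟨hbelow 0 hpos, Or.inr hocto, hocto ▸ hbelow 0 hpos⟩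
    rw [hempty] at this
    exact this
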